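/- For θ ∈ (0, π/2), let ρ = (sin θ)/2 and |E| = (1/2) cos θ sin θ + θ/4 - (1/8) sin(2θ). Then 2(ρ - |E|)/(ρ² |E|) = 8 (2 sin θ - sin θ cos θ - θ) / (sin²θ (sin θ cos θ + θ)), and this quantity is ≥ 4/3. -/

import Mathlib

open Real Set

lemma my_nonneg (f f' : ℝ → ℝ) (hd : ∀ x, HasDerivAt f (f' x) x)
    (h0 : f 0 = 0) (hf' : ∀ x, 0 ≤ x → 0 ≤ f' x) {x : ℝ} (hx : 0 ≤ x) : 0 ≤ f x := by
  have hm : MonotoneOn f (Set.Ici (0:ℝ)) := by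
    apply monotoneOn_of_deriv_nonneg (convex_Ici 0)
      (fun y _ => (hd y).continuousAt.continuousWithinAt)
      (fun y _ => (hd y).differentiableAt.differentiableWithinAt)
      (fun y hy => by
        rw [(hd y).deriv]
        exact hf' y (le_of_lt (by simpa [interior_Ici] using hy)))
  calc (0:ℝ) = f 0 := h0.symm
    _ ≤ f x := hm Set.self_mem_Ici hx hx

lemma my_s3 {x : ℝ} (hx : 0 ≤ x) : x - x^3/6 ≤ Real.sin x := by
  have h := my_nonneg (fun t => Real.sin t - (t - t^3/6))
    (fun t => Real.cos t - (1 - t^2/2))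
    (fun t => by
      have h2 : HasDerivAt (fun s : ℝ => s - s^3/6) (1 - t^2/2) t := by
        have := (hasDerivAt_id t).sub ((hasDerivAt_pow 3 t).div_const 6)
        refine this.congr_deriv ?_
        push_cast; ring
      exact (Real.hasDerivAt_sin t).sub h2)
    (by simp)
    (fun t _ => by nlinarith [Real.one_sub_sq_div_two_le_cos (x := t)]) hx
  simpa using h

lemma my_c4 {x : ℝ} (hx : 0 ≤ x) : Real.cos x ≤ 1 - x^2/2 + x^4/24 := by
  have h := my_nonneg (fun t => 1 - t^2/2 + t^4/24 - Real.cos t)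
    (fun t => -(t - t^3/6 - Real.sin t))
    (fun t => by
      have h2 : HasDerivAt (fun s : ℝ => 1 - s^2/2 + s^4/24) (-t + t^3/6) t := by
        have := (((hasDerivAt_const t (1:ℝ)).sub ((hasDerivAt_pow 2 t).div_const 2)).add
          ((hasDerivAt_pow 4 t).div_const 24))
        refine this.congr_deriv ?_
        push_cast; ring
      have := h2.sub (Real.hasDerivAt_cos t)
      refine this.congr_deriv ?_; ring)
    (by norm_num)
    (fun t ht => by nlinarith [my_s3 ht]) hx
  linarith [h]

lemma my_s5 {x : ℝ} (hx : 0 ≤ x) : Real.sin x ≤ x - x^3/6 + x^5/120 := by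
  have h := my_nonneg (fun t => t - t^3/6 + t^5/120 - Real.sin t)
    (fun t => 1 - t^2/2 + t^4/24 - Real.cos t)
    (fun t => by
      have h2 : HasDerivAt (fun s : ℝ => s - s^3/6 + s^5/120) (1 - t^2/2 + t^4/24) t := by
        have := (((hasDerivAt_id t).sub ((hasDerivAt_pow 3 t).div_const 6)).add
          ((hasDerivAt_pow 5 t).div_const 120))
        refine this.congr_deriv ?_
        push_cast; ring
      exact h2.sub (Real.hasDerivAt_sin t))
    (by norm_num)
    (fun t ht => by nlinarith [my_c4 ht]) hx
  linarith [h]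

lemma my_c6 {x : ℝ} (hx : 0 ≤ x) : 1 - x^2/2 + x^4/24 - x^6/720 ≤ Real.cos x := by
  have h := my_nonneg (fun t => Real.cos t - (1 - t^2/2 + t^4/24 - t^6/720))
    (fun t => (t - t^3/6 + t^5/120) - Real.sin t)
    (fun t => by
      have h2 : HasDerivAt (fun s : ℝ => 1 - s^2/2 + s^4/24 - s^6/720)
          (-(t - t^3/6 + t^5/120)) t := by
        have := ((((hasDerivAt_const t (1:ℝ)).sub ((hasDerivAt_pow 2 t).div_const 2)).add
          ((hasDerivAt_pow 4 t).div_const 24)).sub ((hasDerivAt_pow 6 t).div_const 720))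
        refine this.congr_deriv ?_
        push_cast; ring
      have := (Real.hasDerivAt_cos t).sub h2
      refine this.congr_deriv ?_; ring)
    (by norm_num)
    (fun t ht => by nlinarith [my_s5 ht]) hx
  linarith [h]

lemma my_s7 {x : ℝ} (hx : 0 ≤ x) : x - x^3/6 + x^5/120 - x^7/5040 ≤ Real.sin x := by
  have h := my_nonneg (fun t => Real.sin t - (t - t^3/6 + t^5/120 - t^7/5040))
    (fun t => Real.cos t - (1 - t^2/2 + t^4/24 - t^6/720))
    (fun t => by
      have h2 : HasDerivAt (fun s : ℝ => s - s^3/6 + s^5/120 - s^7/5040)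
          (1 - t^2/2 + t^4/24 - t^6/720) t := by
        have := ((((hasDerivAt_id t).sub ((hasDerivAt_pow 3 t).div_const 6)).add
          ((hasDerivAt_pow 5 t).div_const 120)).sub ((hasDerivAt_pow 7 t).div_const 5040))
        refine this.congr_deriv ?_
        push_cast; ring
      exact (Real.hasDerivAt_sin t).sub h2)
    (by norm_num)
    (fun t ht => by nlinarith [my_c6 ht]) hx
  linarith [h]

lemma my_c8 {x : ℝ} (hx : 0 ≤ x) :
    Real.cos x ≤ 1 - x^2/2 + x^4/24 - x^6/720 + x^8/40320 := by
  have h := my_nonneg (fun t => 1 - t^2/2 + t^4/24 - t^6/720 + t^8/40320 - Real.cos t)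
    (fun t => Real.sin t - (t - t^3/6 + t^5/120 - t^7/5040))
    (fun t => by
      have h2 : HasDerivAt (fun s : ℝ => 1 - s^2/2 + s^4/24 - s^6/720 + s^8/40320)
          (-(t - t^3/6 + t^5/120 - t^7/5040)) t := by
        have := (((((hasDerivAt_const t (1:ℝ)).sub ((hasDerivAt_pow 2 t).div_const 2)).add
          ((hasDerivAt_pow 4 t).div_const 24)).sub ((hasDerivAt_pow 6 t).div_const 720)).add
          ((hasDerivAt_pow 8 t).div_const 40320))
        refine this.congr_deriv ?_
        push_cast; ring
      have := h2.sub (Real.hasDerivAt_cos t)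
      refine this.congr_deriv ?_; ring)
    (by norm_num)
    (fun t ht => by nlinarith [my_s7 ht]) hx
  linarith [h]

lemma my_s9 {x : ℝ} (hx : 0 ≤ x) :
    Real.sin x ≤ x - x^3/6 + x^5/120 - x^7/5040 + x^9/362880 := by
  have h := my_nonneg
    (fun t => t - t^3/6 + t^5/120 - t^7/5040 + t^9/362880 - Real.sin t)
    (fun t => 1 - t^2/2 + t^4/24 - t^6/720 + t^8/40320 - Real.cos t)
    (fun t => by
      have h2 : HasDerivAt (fun s : ℝ => s - s^3/6 + s^5/120 - s^7/5040 + s^9/362880)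
          (1 - t^2/2 + t^4/24 - t^6/720 + t^8/40320) t := by
        have := (((((hasDerivAt_id t).sub ((hasDerivAt_pow 3 t).div_const 6)).add
          ((hasDerivAt_pow 5 t).div_const 120)).sub ((hasDerivAt_pow 7 t).div_const 5040)).add
          ((hasDerivAt_pow 9 t).div_const 362880))
        refine this.congr_deriv ?_
        push_cast; ring
      exact h2.sub (Real.hasDerivAt_sin t))
    (by norm_num)
    (fun t ht => by nlinarith [my_c8 ht]) hx
  linarith [h]

lemma my_polyQ (u : ℝ) (hu : 0 ≤ u) (hub : u ≤ 2.46742) :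
    0 ≤ 19/30 - 467/1260*u + 4/45*u^2 - 188/14175*u^3 + 3607/2721600*u^4
      - 1319/14112000*u^5 + 10639/2286144000*u^6 - 54421/329204736000*u^7
      + 9713/2304433152000*u^8 - 173/2304433152000*u^9 + 1/1152216576000*u^10
      - 1/186659085312000*u^11 := by
  have hw : (0:ℝ) ≤ 2.46742 - u := by linarith
  have hA : (0:ℝ) ≤ 19/30 - 467/1260*u + 4/45*u^2 - 188/14175*u^3 := by
    nlinarith [mul_nonneg hu hw, mul_nonneg (mul_nonneg hu hu) hw, mul_nonneg hu hu,
      sq_nonneg (u - 2), mul_nonneg (mul_nonneg hu hw) hw]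
  have hB : (0:ℝ) ≤ u^4 * (3607/2721600 - 1319/14112000*u) :=
    mul_nonneg (by positivity) (by linarith)
  have hC : (0:ℝ) ≤ u^6 * (10639/2286144000 - 54421/329204736000*u) :=
    mul_nonneg (by positivity) (by linarith)
  have hD : (0:ℝ) ≤ u^8 * (9713/2304433152000 - 173/2304433152000*u) :=
    mul_nonneg (by positivity) (by linarith)
  have hE : (0:ℝ) ≤ u^10 * (1/1152216576000 - 1/186659085312000*u) :=
    mul_nonneg (by positivity) (by linarith)
  nlinarith [hA, hB, hC, hD, hE]

set_option maxHeartbeats 1000000 in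
/-- For θ ∈ (0, π/2), with ρ = sin θ / 2 and |E| = (1/2) cos θ sin θ + θ/4 - (1/8) sin 2θ,
one has 2(ρ - |E|)/(ρ²|E|) = 8(2 sin θ - sin θ cos θ - θ)/(sin²θ (sin θ cos θ + θ)) ≥ 4/3. -/
theorem stmt8 :
    ∀ θ ∈ Ioo (0:ℝ) (π/2),
      (2 * ((Real.sin θ / 2) -
          ((1/2) * Real.cos θ * Real.sin θ + θ/4 - (1/8) * Real.sin (2*θ))) /
        ((Real.sin θ / 2)^2 *
          ((1/2) * Real.cos θ * Real.sin θ + θ/4 - (1/8) * Real.sin (2*θ)))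
      = 8 * (2 * Real.sin θ - Real.sin θ * Real.cos θ - θ) /
          ((Real.sin θ)^2 * (Real.sin θ * Real.cos θ + θ))) ∧
      (4/3 : ℝ) ≤ 8 * (2 * Real.sin θ - Real.sin θ * Real.cos θ - θ) /
          ((Real.sin θ)^2 * (Real.sin θ * Real.cos θ + θ)) := by
  intro θ hθ
  obtain ⟨h0, h1⟩ := hθ
  have hpi := Real.pi_lt_d4
  have hs : 0 < Real.sin θ :=
    Real.sin_pos_of_pos_of_lt_pi h0 (by linarith [Real.pi_pos])
  have hc : 0 < Real.cos θ := Real.cos_pos_of_mem_Ioo ⟨by linarith, h1⟩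
  have hsct : 0 < Real.sin θ * Real.cos θ + θ := by positivity
  have hsin2 : Real.sin (2*θ) = 2 * (Real.sin θ * Real.cos θ) := by
    rw [Real.sin_two_mul]; ring
  constructor
  · rw [hsin2]
    rw [show (1/2) * Real.cos θ * Real.sin θ + θ/4 - (1/8) * (2 * (Real.sin θ * Real.cos θ))
        = (Real.sin θ * Real.cos θ + θ)/4 from by ring]
    field_simp
    ring
  · have hden : 0 < (Real.sin θ)^2 * (Real.sin θ * Real.cos θ + θ) := by positivity
    rw [le_div_iff₀ hden]
    have hL : θ - θ^3/6 + θ^5/120 - θ^7/5040 ≤ Real.sin θ := my_s7 h0.le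
    have hU : Real.sin θ ≤ θ - θ^3/6 + θ^5/120 - θ^7/5040 + θ^9/362880 := my_s9 h0.le
    have h2U : Real.sin (2*θ) ≤ (2*θ) - (2*θ)^3/6 + (2*θ)^5/120 - (2*θ)^7/5040
        + (2*θ)^9/362880 := my_s9 (by linarith)
    have hVsc : Real.sin θ * Real.cos θ ≤
        ((2*θ) - (2*θ)^3/6 + (2*θ)^5/120 - (2*θ)^7/5040 + (2*θ)^9/362880)/2 := by
      rw [show Real.sin θ * Real.cos θ = Real.sin (2*θ)/2 from by rw [hsin2]; ring]
      linarith
    set U := θ - θ^3/6 + θ^5/120 - θ^7/5040 + θ^9/362880 with hUdef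
    set V := ((2*θ) - (2*θ)^3/6 + (2*θ)^5/120 - (2*θ)^7/5040 + (2*θ)^9/362880)/2 with hVdef
    clear_value U V
    have hθub : θ ≤ 1.5708 := by linarith
    have hQ := my_polyQ (θ^2) (by positivity) (by nlinarith)
    have hs2 : (Real.sin θ)^2 ≤ U^2 := by nlinarith
    have hstep1 : (Real.sin θ)^2 * (Real.sin θ * Real.cos θ + θ) ≤ U^2 * (V + θ) :=
      mul_le_mul hs2 (by linarith) hsct.le (sq_nonneg U)
    have hid : 6 * (2 * (θ - θ^3/6 + θ^5/120 - θ^7/5040) - V - θ) - U^2 * (V + θ)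
        = θ^5 * (19/30 - 467/1260*(θ^2) + 4/45*(θ^2)^2 - 188/14175*(θ^2)^3
          + 3607/2721600*(θ^2)^4 - 1319/14112000*(θ^2)^5 + 10639/2286144000*(θ^2)^6
          - 54421/329204736000*(θ^2)^7 + 9713/2304433152000*(θ^2)^8
          - 173/2304433152000*(θ^2)^9 + 1/1152216576000*(θ^2)^10
          - 1/186659085312000*(θ^2)^11) := by
      rw [hUdef, hVdef]; ring
    have hθ5 : (0:ℝ) ≤ θ^5 := by positivity
    have hpos : 0 ≤ 6 * (2 * (θ - θ^3/6 + θ^5/120 - θ^7/5040) - V - θ) - U^2 * (V + θ) := by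
      rw [hid]; exact mul_nonneg hθ5 hQ
    have h6 : U^2 * (V + θ) ≤ 6 * (2 * Real.sin θ - Real.sin θ * Real.cos θ - θ) := by
      linarith
    linarith [hstep1, h6]
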